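/- Define A_k(n; d_1,…,d_r) := k^n · Σ_{j=0}^{r} (-1)^{r-j} Σ_{1 ≤ k_1 < ⋯ < k_j ≤ r} C(c_1/k - 1 + d_{k_1} + ⋯ + d_{k_j}, n+r) with c_1 = n + r + 1 - Σ d_i, k ≥ 2, k | c_1, and all d_i > 1. If c_1 > 0 then A_k(n; d) = 0; if c_1 = 0 then A_k(n; d) = k^n(1 + (-1)^n). -/

import Mathlib

open Finset

/-- Generalized binomial coefficient `C(a, k) = a(a-1)⋯(a-k+1)/k!`. -/
def gbc (a : ℚ) (k : ℕ) : ℚ :=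
  (∏ i ∈ Finset.range k, (a - i)) / (Nat.factorial k)


/-- The `A_k`-genus of the complete intersection `X_n(d₁,…,d_r)` via the combinatorial
formula, where `c₁ = n + r + 1 - ∑ dᵢ`. -/
def Ak (n r k : ℕ) (d : Fin r → ℤ) : ℚ :=
  (k : ℚ) ^ n * ∑ S ∈ (Finset.univ : Finset (Fin r)).powerset,
    (-1) ^ (r - S.card) *
      gbc (((n : ℚ) + r + 1 - ∑ i, (d i : ℚ)) / k - 1 + ∑ i ∈ S, (d i : ℚ)) (n + r)

lemma gbc_int_zero (a : ℤ) (m : ℕ) (h0 : 0 ≤ a) (h1 : a < m) :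
    gbc (a : ℚ) m = 0 := by
  unfold gbc
  rw [Finset.prod_eq_zero (i := a.toNat) (by simp [Finset.mem_range]; omega)]
  · simp
  · have : ((a.toNat : ℕ) : ℚ) = (a : ℚ) := by
      exact_mod_cast congrArg (Int.cast : ℤ → ℚ) (Int.toNat_of_nonneg h0)
    rw [this]; ring

lemma gbc_self (m : ℕ) : gbc (m : ℚ) m = 1 := by
  unfold gbc
  rw [div_eq_one_iff_eq (by exact_mod_cast (Nat.factorial_pos m).ne')]
  rw [← Finset.prod_range_reflect]
  have h : ∀ j ∈ Finset.range m, ((m : ℚ) - ((m - 1 - j : ℕ) : ℚ)) = ((j + 1 : ℕ) : ℚ) := by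
    intro j hj
    simp only [Finset.mem_range] at hj
    have : m - 1 - j = m - (j + 1) := by omega
    rw [this, Nat.cast_sub (by omega)]
    push_cast; ring
  rw [Finset.prod_congr rfl h, ← Nat.cast_prod, Finset.prod_range_add_one_eq_factorial]

lemma gbc_neg_one (m : ℕ) : gbc (-1) m = (-1) ^ m := by
  unfold gbc
  have h : ∀ j ∈ Finset.range m, ((-1 : ℚ) - j) = (-1) * ((j + 1 : ℕ) : ℚ) := by
    intro j _; push_cast; ring
  rw [Finset.prod_congr rfl h, Finset.prod_mul_distrib, Finset.prod_const,
    ← Nat.cast_prod, Finset.prod_range_add_one_eq_factorial]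
  rw [mul_div_assoc, div_self (by exact_mod_cast (Nat.factorial_pos m).ne')]
  simp

theorem Ak_values (n r k : ℕ) (hr : 1 ≤ r) (hk : 2 ≤ k) (d : Fin r → ℤ)
    (hd : ∀ i, 1 < d i) (hdvd : (k : ℤ) ∣ ((n : ℤ) + r + 1 - ∑ i, d i)) :
    (0 < (n : ℤ) + r + 1 - ∑ i, d i → Ak n r k d = 0) ∧
      ((n : ℤ) + r + 1 - ∑ i, d i = 0 → Ak n r k d = (k : ℚ) ^ n * (1 + (-1) ^ n)) := by
  have hk0 : (k : ℚ) ≠ 0 := by positivity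
  have hcast : ((n : ℚ) + r + 1 - ∑ i, (d i : ℚ)) =
      (((n : ℤ) + r + 1 - ∑ i, d i : ℤ) : ℚ) := by push_cast; ring
  constructor
  · intro hc
    obtain ⟨q, hq⟩ := hdvd
    have hq1 : 1 ≤ q := by nlinarith [hq, hc]
    unfold Ak
    rw [hcast, hq]
    have hsum0 : ∀ S ∈ (Finset.univ : Finset (Fin r)).powerset,
        (-1 : ℚ) ^ (r - S.card) *
          gbc ((((k : ℤ) * q : ℤ) : ℚ) / k - 1 + ∑ i ∈ S, (d i : ℚ)) (n + r) = 0 := by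
      intro S _
      have harg : (((k : ℤ) * q : ℤ) : ℚ) / k - 1 + ∑ i ∈ S, (d i : ℚ) =
          ((q - 1 + ∑ i ∈ S, d i : ℤ) : ℚ) := by
        push_cast
        field_simp
      rw [harg, gbc_int_zero]
      · ring
      · have : (0 : ℤ) ≤ ∑ i ∈ S, d i :=
          Finset.sum_nonneg fun i _ => le_of_lt (lt_trans one_pos (hd i))
        omega
      · have hle : ∑ i ∈ S, d i ≤ ∑ i, d i :=
          Finset.sum_le_sum_of_subset_of_nonneg (Finset.subset_univ S)
            (fun i _ _ => le_of_lt (lt_trans one_pos (hd i)))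
        have : (k : ℤ) * q ≤ (n : ℤ) + r + 1 - ∑ i, d i := le_of_eq hq.symm
        push_cast
        nlinarith [hq, hle, hq1, (by exact_mod_cast hk : (2 : ℤ) ≤ k)]
    rw [Finset.sum_eq_zero hsum0, mul_zero]
  · intro hc
    have hsd : (∑ i, d i) = (n : ℤ) + r + 1 := by omega
    unfold Ak
    rw [hcast, hc]
    congr 1
    have key : ∀ S ∈ (Finset.univ : Finset (Fin r)).powerset,
        (-1 : ℚ) ^ (r - S.card) *
          gbc (((0 : ℤ) : ℚ) / k - 1 + ∑ i ∈ S, (d i : ℚ)) (n + r) =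
        (if S = (Finset.univ : Finset (Fin r)) then 1 else 0) +
          (if S = (∅ : Finset (Fin r)) then (-1 : ℚ) ^ n else 0) := by
      intro S _
      by_cases hu : S = Finset.univ
      · subst hu
        have hne : (Finset.univ : Finset (Fin r)) ≠ ∅ := by
          simp [Finset.univ_eq_empty_iff]
          exact Fin.pos_iff_nonempty.mp (by omega)
        have harg : ((0 : ℤ) : ℚ) / k - 1 + ∑ i, (d i : ℚ) = (((n : ℕ) + r : ℕ) : ℚ) := by
          have : (∑ i, (d i : ℚ)) = (((∑ i, d i : ℤ)) : ℚ) := by push_cast; ring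
          rw [this, hsd]; push_cast; ring
        rw [harg, gbc_self]
        simp [hne]
      · by_cases he : S = ∅
        · subst he
          have harg : ((0 : ℤ) : ℚ) / k - 1 + ∑ i ∈ (∅ : Finset (Fin r)), (d i : ℚ)
              = (-1 : ℚ) := by simp
          rw [harg, gbc_neg_one, if_neg hu, if_pos rfl, zero_add, Finset.card_empty,
            Nat.sub_zero, ← pow_add]
          have h2 : r + (n + r) = n + 2 * r := by ring
          rw [h2, pow_add, pow_mul]
          norm_num
        · simp only [if_neg hu, if_neg he, add_zero]
          -- S nonempty proper subset
          obtain ⟨x, hx⟩ := Finset.nonempty_iff_ne_empty.mpr he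
          have hlb : (1 : ℤ) ≤ ∑ i ∈ S, d i := by
            have := Finset.single_le_sum
              (f := d) (fun i _ => le_of_lt (lt_trans one_pos (hd i))) hx
            have := hd x
            omega
          have hub : ∑ i ∈ S, d i < ∑ i, d i := by
            obtain ⟨y, hy⟩ : ∃ y, y ∉ S := by
              by_contra h
              push_neg at h
              exact hu (Finset.eq_univ_of_forall h)
            exact Finset.sum_lt_sum_of_subset (Finset.subset_univ S)
              (Finset.mem_univ y) hy (lt_trans one_pos (hd y))
              (fun i _ _ => le_of_lt (lt_trans one_pos (hd i)))
          have harg : ((0 : ℤ) : ℚ) / k - 1 + ∑ i ∈ S, (d i : ℚ) =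
              (((∑ i ∈ S, d i) - 1 : ℤ) : ℚ) := by push_cast; ring
          rw [harg, gbc_int_zero]
          · ring
          · omega
          · push_cast; omega
    rw [Finset.sum_congr rfl key, Finset.sum_add_distrib]
    rw [Finset.sum_ite_eq' _ _ (fun _ => (1 : ℚ)),
      Finset.sum_ite_eq' _ _ (fun _ => (-1 : ℚ) ^ n)]
    simp
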